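/- Let U_1, U_2, H_1, H_2 : [0, T] → M_n(ℂ) with H_1, H_2 continuous, U_1, U_2 differentiable, U_i(0) = I, U_i'(t) = −i·H_i(t)·U_i(t) for i = 1, 2, and suppose ‖U_1(t)‖ ≤ K, ‖U_2(t)‖ ≤ K, ‖H_1(t)‖ ≤ K and ‖H_2(t)‖ ≤ K for all t ∈ [0, T]. Define S(t) = ∫_0^t (H_1(s)† − H_2(s)) ds. Then there exists a constant C depending only on K and T such that ‖U_1(T)·U_1(T)†·U_2(T) − U_1(T)‖ ≤ C · sup_{t ∈ [0,T]} ‖S(t)‖. -/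

import Mathlib

open Matrix
open scoped Matrix.Norms.L2Operator

private lemma evolution_aux_norm_mul_le_of_le {n : ℕ} {a b : Matrix (Fin n) (Fin n) ℂ} {x y : ℝ}
    (ha : ‖a‖ ≤ x) (hb : ‖b‖ ≤ y) : ‖a * b‖ ≤ x * y :=
  le_trans (norm_mul_le _ _)
    (mul_le_mul ha hb (norm_nonneg _) (le_trans (norm_nonneg _) ha))

/-- Comparison bound for two evolutions: with `S(t) = ∫_0^t (H₁(s)† − H₂(s)) ds`,
`‖U₁(T)U₁(T)†U₂(T) − U₁(T)‖ ≤ C · sup_{t∈[0,T]} ‖S(t)‖`, where `C` depends only on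
`K` and `T`. -/
theorem evolution_comparison_bound (K T : ℝ) (hK : 0 < K) (hT : 0 ≤ T) :
    ∃ C : ℝ, ∀ (n : ℕ) (U₁ U₂ H₁ H₂ S : ℝ → Matrix (Fin n) (Fin n) ℂ),
      ContinuousOn H₁ (Set.Icc 0 T) → ContinuousOn H₂ (Set.Icc 0 T) →
      U₁ 0 = 1 → U₂ 0 = 1 →
      (∀ t ∈ Set.Icc (0 : ℝ) T,
        HasDerivWithinAt U₁ ((-Complex.I) • (H₁ t * U₁ t)) (Set.Icc 0 T) t) →
      (∀ t ∈ Set.Icc (0 : ℝ) T,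
        HasDerivWithinAt U₂ ((-Complex.I) • (H₂ t * U₂ t)) (Set.Icc 0 T) t) →
      (∀ t ∈ Set.Icc (0 : ℝ) T, ‖U₁ t‖ ≤ K) →
      (∀ t ∈ Set.Icc (0 : ℝ) T, ‖U₂ t‖ ≤ K) →
      (∀ t ∈ Set.Icc (0 : ℝ) T, ‖H₁ t‖ ≤ K) →
      (∀ t ∈ Set.Icc (0 : ℝ) T, ‖H₂ t‖ ≤ K) →
      (∀ t : ℝ, S t = ∫ s in (0 : ℝ)..t, ((H₁ s)ᴴ - H₂ s)) →
      ‖U₁ T * (U₁ T)ᴴ * U₂ T - U₁ T‖ ≤ C * ⨆ t : Set.Icc (0 : ℝ) T, ‖S t.1‖ := by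
  refine ⟨2*K^4*T + K^3, ?_⟩
  intro n U₁ U₂ H₁ H₂ S hH₁ hH₂ hU₁0 hU₂0 hU₁' hU₂' hU₁K hU₂K hH₁K hH₂K hS
  have h0T : (0:ℝ) ∈ Set.Icc (0:ℝ) T := ⟨le_refl 0, hT⟩
  have hTT : T ∈ Set.Icc (0:ℝ) T := ⟨hT, le_refl T⟩
  set M := ⨆ t : Set.Icc (0:ℝ) T, ‖S t.1‖ with hM
  -- continuity of integrand
  have hf : ContinuousOn (fun s => (H₁ s)ᴴ - H₂ s) (Set.Icc 0 T) := by
    have : ContinuousOn (fun s => (H₁ s)ᴴ) (Set.Icc (0:ℝ) T) := by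
      simpa [Matrix.star_eq_conjTranspose] using hH₁.star
    exact this.sub hH₂
  -- FTC: derivative of S within Icc
  have hSderiv : ∀ t ∈ Set.Icc (0:ℝ) T,
      HasDerivWithinAt S ((H₁ t)ᴴ - H₂ t) (Set.Icc 0 T) t := by
    intro t ht
    have hInt : IntervalIntegrable (fun s => (H₁ s)ᴴ - H₂ s) MeasureTheory.volume 0 t :=
      (hf.mono (Set.uIcc_subset_Icc h0T ht)).intervalIntegrable
    have hmeas : StronglyMeasurableAtFilter (fun s => (H₁ s)ᴴ - H₂ s)
        (nhdsWithin t (Set.Icc 0 T)) MeasureTheory.volume :=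
      hf.stronglyMeasurableAtFilter_nhdsWithin measurableSet_Icc t
    haveI : Fact (t ∈ Set.Icc (0:ℝ) T) := ⟨ht⟩
    have := intervalIntegral.integral_hasDerivWithinAt_right
      (s := Set.Icc (0:ℝ) T) (t := Set.Icc (0:ℝ) T) hInt hmeas (hf t ht)
    exact this.congr (fun y _ => hS y) (hS t)
  have hScont : ContinuousOn S (Set.Icc 0 T) :=
    fun t ht => (hSderiv t ht).continuousWithinAt
  have hbdd : BddAbove (Set.range fun t : Set.Icc (0:ℝ) T => ‖S t.1‖) := by
    have hc : IsCompact ((fun t => ‖S t‖) '' Set.Icc (0:ℝ) T) :=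
      isCompact_Icc.image_of_continuousOn (continuous_norm.comp_continuousOn hScont)
    have : (Set.range fun t : Set.Icc (0:ℝ) T => ‖S t.1‖)
        = (fun t => ‖S t‖) '' Set.Icc (0:ℝ) T := by
      rw [show (fun t : Set.Icc (0:ℝ) T => ‖S t.1‖) = (fun t => ‖S t‖) ∘ Subtype.val from rfl,
        Set.range_comp, Subtype.range_coe]
    rw [this]
    exact hc.bddAbove
  have hMle : ∀ t ∈ Set.Icc (0:ℝ) T, ‖S t‖ ≤ M := fun t ht => le_ciSup hbdd ⟨t, ht⟩
  have hM0 : 0 ≤ M := le_trans (norm_nonneg _) (hMle 0 h0T)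
  -- derivative of U₁ᴴ
  have hA : ∀ t ∈ Set.Icc (0:ℝ) T,
      HasDerivWithinAt (fun t => (U₁ t)ᴴ) (Complex.I • ((U₁ t)ᴴ * (H₁ t)ᴴ)) (Set.Icc 0 T) t := by
    intro t ht
    have := (hU₁' t ht).star
    simp only [star_smul, star_neg, Complex.star_def, Complex.conj_I, neg_neg,
      Matrix.star_eq_conjTranspose, Matrix.conjTranspose_mul] at this
    exact this
  set V : ℝ → Matrix (Fin n) (Fin n) ℂ :=
    fun t => (U₁ t)ᴴ * U₂ t - Complex.I • ((U₁ t)ᴴ * (S t * U₂ t)) with hV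
  set D : ℝ → Matrix (Fin n) (Fin n) ℂ :=
    fun t => (U₁ t)ᴴ * (H₁ t)ᴴ * (S t * U₂ t) - (U₁ t)ᴴ * (S t * (H₂ t * U₂ t)) with hD
  have hVderiv : ∀ t ∈ Set.Icc (0:ℝ) T, HasDerivWithinAt V (D t) (Set.Icc 0 T) t := by
    intro t ht
    have h1 := (hA t ht).mul (hU₂' t ht)
    have h2 := (hSderiv t ht).mul (hU₂' t ht)
    have h3 := (hA t ht).mul h2
    have h4 := h1.sub (h3.const_smul Complex.I)
    refine h4.congr_deriv ?_
    simp only [hD, smul_smul, Complex.I_mul_I, smul_mul_assoc, mul_smul_comm, smul_sub, smul_add,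
      mul_add, add_mul, sub_mul, mul_sub, neg_smul, one_smul, neg_neg, neg_mul, mul_neg,
      mul_assoc, Complex.I_mul_I]
    match_scalars <;> simp [Complex.I_sq]
  have hDnorm : ∀ t ∈ Set.Icc (0:ℝ) T, ‖D t‖ ≤ 2*K^3*M := by
    intro t ht
    have n1 : ‖(U₁ t)ᴴ‖ ≤ K := by
      rw [Matrix.l2_opNorm_conjTranspose]; exact hU₁K t ht
    have n2 : ‖(H₁ t)ᴴ‖ ≤ K := by
      rw [Matrix.l2_opNorm_conjTranspose]; exact hH₁K t ht
    have b1 : ‖(U₁ t)ᴴ * (H₁ t)ᴴ * (S t * U₂ t)‖ ≤ (K*K)*(M*K) :=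
      evolution_aux_norm_mul_le_of_le (evolution_aux_norm_mul_le_of_le n1 n2)
        (evolution_aux_norm_mul_le_of_le (hMle t ht) (hU₂K t ht))
    have b2 : ‖(U₁ t)ᴴ * (S t * (H₂ t * U₂ t))‖ ≤ K*(M*(K*K)) :=
      evolution_aux_norm_mul_le_of_le n1
        (evolution_aux_norm_mul_le_of_le (hMle t ht) (evolution_aux_norm_mul_le_of_le (hH₂K t ht) (hU₂K t ht)))
    calc ‖D t‖ ≤ ‖(U₁ t)ᴴ * (H₁ t)ᴴ * (S t * U₂ t)‖ + ‖(U₁ t)ᴴ * (S t * (H₂ t * U₂ t))‖ :=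
          norm_sub_le _ _
      _ ≤ (K*K)*(M*K) + K*(M*(K*K)) := add_le_add b1 b2
      _ = 2*K^3*M := by ring
  have hMVT : ‖V T - V 0‖ ≤ (2*K^3*M) * T := by
    have := (convex_Icc (0:ℝ) T).norm_image_sub_le_of_norm_hasDerivWithin_le
      hVderiv hDnorm h0T hTT
    simpa [abs_of_nonneg hT] using this
  have hS0 : S 0 = 0 := by rw [hS 0, intervalIntegral.integral_same]
  have hV0 : V 0 = 1 := by
    simp [hV, hU₁0, hU₂0, hS0]
  have key : U₁ T * (U₁ T)ᴴ * U₂ T - U₁ T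
      = U₁ T * (V T - V 0) + Complex.I • (U₁ T * ((U₁ T)ᴴ * (S T * U₂ T))) := by
    rw [hV0]
    simp only [hV, mul_sub, mul_one, mul_smul_comm, mul_assoc]
    abel
  rw [key]
  have n1T : ‖(U₁ T)ᴴ‖ ≤ K := by
    rw [Matrix.l2_opNorm_conjTranspose]; exact hU₁K T hTT
  have bb : ‖Complex.I • (U₁ T * ((U₁ T)ᴴ * (S T * U₂ T)))‖ ≤ K*(K*(M*K)) := by
    rw [norm_smul, Complex.norm_I, one_mul]
    exact evolution_aux_norm_mul_le_of_le (hU₁K T hTT)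
      (evolution_aux_norm_mul_le_of_le n1T (evolution_aux_norm_mul_le_of_le (hMle T hTT) (hU₂K T hTT)))
  calc ‖U₁ T * (V T - V 0) + Complex.I • (U₁ T * ((U₁ T)ᴴ * (S T * U₂ T)))‖
      ≤ ‖U₁ T * (V T - V 0)‖ + ‖Complex.I • (U₁ T * ((U₁ T)ᴴ * (S T * U₂ T)))‖ :=
        norm_add_le _ _
    _ ≤ ‖U₁ T‖ * ‖V T - V 0‖ + K*(K*(M*K)) := add_le_add (norm_mul_le _ _) bb
    _ ≤ K * ((2*K^3*M) * T) + K*(K*(M*K)) := by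
        have h := mul_le_mul (hU₁K T hTT) hMVT (norm_nonneg _) hK.le
        linarith
    _ = (2*K^4*T + K^3) * M := by ring
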